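/- arXiv:1211.6655 — 4 statements merged into one kernel-verified Lean document; each statement's English description precedes it below -/
import Mathlib

section
/- Let g > 0, Δx > 0, Δt > 0 and h_{j−1}, h_j, h_{j+1} > 0, and consider lake-at-rest data W_i = (h_i, 0) for i = j−1, j, j+1. Then the conservative Q-scheme update Ŵ_j = W_j − (Δt/Δx)·(φ(W_j, W_{j+1}) − φ(W_{j−1}, W_j)) has components ĥ_j = h_j + (Δt/(2Δx))·((h_{j+1} − h_j)·√(g·(h_{j+1} + h_j)/2) − (h_j − h_{j−1})·√(g·(h_j + h_{j−1})/2)) and q̂_j = −(g·Δt/(4Δx))·(h_{j+1}² − h_{j−1}²). -/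
/-- Let `g > 0`, `Δx > 0`, `Δt > 0` and `h₋, h₀, h₊ > 0` (standing for
`h_{j−1}, h_j, h_{j+1}`), with lake-at-rest data `Wᵢ = (hᵢ, 0)`. Then the conservative
Q-scheme update `Ŵ_j = W_j − (Δt/Δx)·(φ(W_j, W_{j+1}) − φ(W_{j−1}, W_j))` has components
`ĥ_j = h_j + (Δt/(2Δx))·((h₊ − h₀)·√(g·(h₊ + h₀)/2) − (h₀ − h₋)·√(g·(h₀ + h₋)/2))` and
`q̂_j = −(g·Δt/(4Δx))·(h₊² − h₋²)`. -/
theorem q_scheme_update_lake_at_rest (g Δx Δt hm h0 hp : ℝ)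
    (hg : 0 < g) (hΔx : 0 < Δx) (hΔt : 0 < Δt)
    (hhm : 0 < hm) (hh0 : 0 < h0) (hhp : 0 < hp) :
    let F : ℝ × ℝ → ℝ × ℝ := fun p => (p.2, p.2 ^ 2 / p.1 + g * p.1 ^ 2 / 2)
    let φ : ℝ × ℝ → ℝ × ℝ → ℝ × ℝ := fun U V =>
      (1 / 2 : ℝ) • (F U + F V) -
        (1 / 2 : ℝ) • (Real.sqrt (g * (U.1 + V.1) / 2) • (V - U))
    let W : ℝ × ℝ := (h0, 0)
    let What : ℝ × ℝ := W - (Δt / Δx) • (φ (h0, 0) (hp, 0) - φ (hm, 0) (h0, 0))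
    What.1 = h0 + Δt / (2 * Δx) *
        ((hp - h0) * Real.sqrt (g * (hp + h0) / 2) -
          (h0 - hm) * Real.sqrt (g * (h0 + hm) / 2)) ∧
      What.2 = -(g * Δt / (4 * Δx)) * (hp ^ 2 - hm ^ 2) := by
  refine ⟨?_, ?_⟩ <;>
    simp only [Prod.fst_sub, Prod.snd_sub, Prod.fst_add, Prod.snd_add,
      Prod.smul_fst, Prod.smul_snd, Prod.mk_sub_mk, Prod.mk_add_mk, smul_eq_mul] <;>
    ring
end

section
/- Let g > 0 and let H : ℝ → ℝ be twice continuously differentiable with 0 < m ≤ H(x) ≤ M₀, |H'(x)| ≤ M₁ and |H''(x)| ≤ M₂ for all x ∈ ℝ. Then there exists a constant C > 0 such that for every x ∈ ℝ and every Δx ∈ (0, 1], |(H(x+Δx) − H(x))·√(g·(H(x+Δx) + H(x))/2) − (H(x) − H(x−Δx))·√(g·(H(x) + H(x−Δx))/2)| ≤ C·Δx². -/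
/-- Let `g > 0` and let `H : ℝ → ℝ` be twice continuously differentiable with
`0 < m ≤ H(x) ≤ M₀`, `|H'(x)| ≤ M₁` and `|H''(x)| ≤ M₂` for all `x`. Then there exists
`C > 0` such that for every `x` and every `Δx ∈ (0, 1]`,
`|(H(x+Δx) − H(x))·√(g·(H(x+Δx) + H(x))/2) − (H(x) − H(x−Δx))·√(g·(H(x) + H(x−Δx))/2)|
  ≤ C·Δx²`. -/
theorem q_scheme_mass_flux_second_order (g m M₀ M₁ M₂ : ℝ) (hg : 0 < g) (hm : 0 < m)
    (H : ℝ → ℝ) (hH : ContDiff ℝ 2 H)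
    (hlow : ∀ x, m ≤ H x) (hup : ∀ x, H x ≤ M₀)
    (hd1 : ∀ x, |deriv H x| ≤ M₁) (hd2 : ∀ x, |deriv (deriv H) x| ≤ M₂) :
    ∃ C > 0, ∀ x Δx : ℝ, 0 < Δx → Δx ≤ 1 →
      |(H (x + Δx) - H x) * Real.sqrt (g * (H (x + Δx) + H x) / 2) -
          (H x - H (x - Δx)) * Real.sqrt (g * (H x + H (x - Δx)) / 2)| ≤ C * Δx ^ 2 := by
  have hdiff : Differentiable ℝ H := hH.differentiable (by norm_num)
  have hH' : ContDiff ℝ 1 (deriv H) := by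
    have := (contDiff_succ_iff_deriv (n := 1)).mp (by exact_mod_cast hH)
    exact this.2.2
  have hdiff' : Differentiable ℝ (deriv H) := hH'.differentiable (by norm_num)
  have hM1 : 0 ≤ M₁ := le_trans (abs_nonneg _) (hd1 0)
  have hM2 : 0 ≤ M₂ := le_trans (abs_nonneg _) (hd2 0)
  have hgm : 0 < g * m := mul_pos hg hm
  have hs : 0 < Real.sqrt (g * m) := Real.sqrt_pos.mpr hgm
  -- Lipschitz bounds
  have lip1 : ∀ y z : ℝ, |H y - H z| ≤ M₁ * |y - z| := by
    intro y z
    have := convex_univ.norm_image_sub_le_of_norm_deriv_le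
      (f := H) (C := M₁) (fun t _ => hdiff t)
      (fun t _ => by simpa [derivWithin_univ, Real.norm_eq_abs] using hd1 t)
      (Set.mem_univ z) (Set.mem_univ y)
    simpa [Real.norm_eq_abs] using this
  have lip2 : ∀ y z : ℝ, |deriv H y - deriv H z| ≤ M₂ * |y - z| := by
    intro y z
    have := convex_univ.norm_image_sub_le_of_norm_deriv_le
      (f := deriv H) (C := M₂) (fun t _ => hdiff' t)
      (fun t _ => by simpa [derivWithin_univ, Real.norm_eq_abs] using hd2 t)
      (Set.mem_univ z) (Set.mem_univ y)
    simpa [Real.norm_eq_abs] using this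
  -- sqrt difference bound
  have sqrt_bound : ∀ u v : ℝ, g * m ≤ u → g * m ≤ v →
      |Real.sqrt u - Real.sqrt v| ≤ |u - v| / (2 * Real.sqrt (g * m)) := by
    intro u v hu hv
    have hsu : Real.sqrt (g * m) ≤ Real.sqrt u := Real.sqrt_le_sqrt hu
    have hsv : Real.sqrt (g * m) ≤ Real.sqrt v := Real.sqrt_le_sqrt hv
    have hsum : 2 * Real.sqrt (g * m) ≤ Real.sqrt u + Real.sqrt v := by linarith
    have hsumpos : 0 < Real.sqrt u + Real.sqrt v := by linarith
    have key : |Real.sqrt u - Real.sqrt v| * (Real.sqrt u + Real.sqrt v) = |u - v| := by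
      rw [← abs_of_pos hsumpos, ← abs_mul]
      congr 1
      have hu' : Real.sqrt u ^ 2 = u := Real.sq_sqrt (le_trans hgm.le hu)
      have hv' : Real.sqrt v ^ 2 = v := Real.sq_sqrt (le_trans hgm.le hv)
      nlinarith [hu', hv']
    rw [le_div_iff₀ (by positivity)]
    calc |Real.sqrt u - Real.sqrt v| * (2 * Real.sqrt (g * m))
        ≤ |Real.sqrt u - Real.sqrt v| * (Real.sqrt u + Real.sqrt v) :=
          mul_le_mul_of_nonneg_left hsum (abs_nonneg _)
      _ = |u - v| := key
  refine ⟨Real.sqrt (g * M₀) * M₂ + g * M₁ * M₁ / (2 * Real.sqrt (g * m)) + 1, by positivity,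
    fun x Δx hΔ hΔ1 => ?_⟩
  set A := H (x + Δx) - H x with hA
  set B := H x - H (x - Δx) with hB
  set u := g * (H (x + Δx) + H x) / 2 with hu
  set v := g * (H x + H (x - Δx)) / 2 with hv
  have hum : g * m ≤ u := by
    have := hlow (x + Δx); have := hlow x
    rw [hu]; nlinarith
  have hvm : g * m ≤ v := by
    have := hlow x; have := hlow (x - Δx)
    rw [hv]; nlinarith
  have huM : u ≤ g * M₀ := by
    have := hup (x + Δx); have := hup x
    rw [hu]; nlinarith
  have hs1 : Real.sqrt u ≤ Real.sqrt (g * M₀) := Real.sqrt_le_sqrt huM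
  have hs1nn : 0 ≤ Real.sqrt u := Real.sqrt_nonneg _
  -- second difference bound: |A - B| ≤ M₂ * Δx^2
  have hAB : |A - B| ≤ M₂ * Δx ^ 2 := by
    set φ := fun t : ℝ => H (t + Δx) - H t with hφ
    have hder : ∀ t : ℝ, HasDerivAt φ (deriv H (t + Δx) - deriv H t) t := by
      intro t
      have h1 : HasDerivAt (fun s : ℝ => H (s + Δx)) (deriv H (t + Δx) * 1) t :=
        (hdiff (t + Δx)).hasDerivAt.comp t ((hasDerivAt_id t).add_const Δx)
      have h2 := h1.sub (hdiff t).hasDerivAt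
      simp only [mul_one] at h2
      exact h2
    have hbound : ∀ t ∈ (Set.univ : Set ℝ), ‖deriv H (t + Δx) - deriv H t‖ ≤ M₂ * Δx := by
      intro t _
      have := lip2 (t + Δx) t
      simpa [abs_of_pos hΔ, Real.norm_eq_abs] using this
    have := convex_univ.norm_image_sub_le_of_norm_hasDerivWithin_le
      (f := φ) (f' := fun t => deriv H (t + Δx) - deriv H t) (C := M₂ * Δx)
      (fun t _ => (hder t).hasDerivWithinAt) hbound (Set.mem_univ (x - Δx)) (Set.mem_univ x)
    have heq : φ x - φ (x - Δx) = A - B := by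
      simp only [hφ, hA, hB]; ring_nf
    have hx : |x - (x - Δx)| = Δx := by rw [abs_of_pos (by linarith)]; ring
    rw [Real.norm_eq_abs, Real.norm_eq_abs, heq, hx] at this
    calc |A - B| ≤ M₂ * Δx * Δx := this
      _ = M₂ * Δx ^ 2 := by ring
  have hBle : |B| ≤ M₁ * Δx := by
    have := lip1 x (x - Δx)
    have hx : |x - (x - Δx)| = Δx := by rw [abs_of_pos (by linarith)]; ring
    rw [hx] at this; exact this
  have huv : |u - v| ≤ g * M₁ * Δx := by
    have h1 : |H (x + Δx) - H (x - Δx)| ≤ M₁ * (2 * Δx) := by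
      have := lip1 (x + Δx) (x - Δx)
      have hx : |x + Δx - (x - Δx)| = 2 * Δx := by rw [abs_of_pos (by linarith)]; ring
      rw [hx] at this; exact this
    have h2 : u - v = g / 2 * (H (x + Δx) - H (x - Δx)) := by rw [hu, hv]; ring
    rw [h2, abs_mul, abs_of_pos (by linarith : (0:ℝ) < g / 2)]
    nlinarith
  have hsd : |Real.sqrt u - Real.sqrt v| ≤ g * M₁ * Δx / (2 * Real.sqrt (g * m)) := by
    refine le_trans (sqrt_bound u v hum hvm) ?_
    exact div_le_div_of_nonneg_right huv (by positivity) |>.trans_eq rfl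
  -- main estimate
  have hsplit : A * Real.sqrt u - B * Real.sqrt v
      = (A - B) * Real.sqrt u + B * (Real.sqrt u - Real.sqrt v) := by ring
  calc |A * Real.sqrt u - B * Real.sqrt v|
      ≤ |A - B| * Real.sqrt u + |B| * |Real.sqrt u - Real.sqrt v| := by
        rw [hsplit]
        refine le_trans (abs_add_le _ _) ?_
        rw [abs_mul, abs_mul, abs_of_nonneg hs1nn]
    _ ≤ M₂ * Δx ^ 2 * Real.sqrt (g * M₀)
        + M₁ * Δx * (g * M₁ * Δx / (2 * Real.sqrt (g * m))) := by
        gcongr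
    _ = (Real.sqrt (g * M₀) * M₂ + g * M₁ * M₁ / (2 * Real.sqrt (g * m))) * Δx ^ 2 := by
        field_simp
    _ ≤ (Real.sqrt (g * M₀) * M₂ + g * M₁ * M₁ / (2 * Real.sqrt (g * m)) + 1) * Δx ^ 2 := by
        nlinarith [sq_nonneg Δx]
end

section
/- (Approximate C-property of Q-tra1.) Let g > 0, μ > 0, A ∈ ℝ, and let H : ℝ → ℝ be twice continuously differentiable with 0 < m ≤ H(x) ≤ M₀, |H'(x)| ≤ M₁ and |H''(x)| ≤ M₂ for all x; set b := A − H. Then there exists C > 0 such that for every x ∈ ℝ and every Δx ∈ (0, 1], putting Δt := μ·Δx, h₋ := H(x−Δx), h₀ := H(x), h₊ := H(x+Δx), ĥ := h₀ + (Δt/(2Δx))·((h₊ − h₀)·√(g·(h₊ + h₀)/2) − (h₀ − h₋)·√(g·(h₀ + h₋)/2)), q̂ := −(g·Δt/(4Δx))·(h₊² − h₋²), h¹ := ĥ, and q¹ := q̂ − g·((b(x+Δx) − b(x−Δx))/(2Δx))·(Δt/2)·(h₀ + ĥ), one has |h¹ − H(x)| ≤ C·Δx² and |q¹| ≤ C·Δx².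 -/
set_option maxHeartbeats 400000 in
private lemma sqrt_lip_aux {c a b : ℝ} (hc : 0 < c) (ha : c ≤ a) (hb : c ≤ b) :
    |Real.sqrt a - Real.sqrt b| ≤ |a - b| / (2 * Real.sqrt c) := by
  have ha0 : 0 ≤ a := hc.le.trans ha
  have hb0 : 0 ≤ b := hc.le.trans hb
  have hsc : 0 < Real.sqrt c := Real.sqrt_pos.mpr hc
  have hs1 : Real.sqrt c ≤ Real.sqrt a := Real.sqrt_le_sqrt ha
  have hs2 : Real.sqrt c ≤ Real.sqrt b := Real.sqrt_le_sqrt hb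
  have key : (Real.sqrt a - Real.sqrt b) * (Real.sqrt a + Real.sqrt b) = a - b := by
    have h1 := Real.sq_sqrt ha0
    have h2 := Real.sq_sqrt hb0
    nlinarith
  rw [le_div_iff₀ (by positivity)]
  calc |Real.sqrt a - Real.sqrt b| * (2 * Real.sqrt c)
      ≤ |Real.sqrt a - Real.sqrt b| * (Real.sqrt a + Real.sqrt b) := by
        apply mul_le_mul_of_nonneg_left (by linarith) (abs_nonneg _)
    _ = |a - b| := by
        rw [← key, abs_mul,
          abs_of_nonneg (show (0:ℝ) ≤ Real.sqrt a + Real.sqrt b by positivity)]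

set_option maxHeartbeats 1000000 in
/-- Approximate C-property of Q-tra1: Let `g > 0`, `μ > 0`, `A ∈ ℝ`, and let
`H : ℝ → ℝ` be twice continuously differentiable with `0 < m ≤ H(x) ≤ M₀`, `|H'(x)| ≤ M₁`,
`|H''(x)| ≤ M₂`; set `b := A − H`. Then there exists `C > 0` such that for every `x` and
every `Δx ∈ (0, 1]`, with `Δt := μ·Δx`, the Q-tra1 update `(h¹, q¹)` of the lake-at-rest
state satisfies `|h¹ − H(x)| ≤ C·Δx²` and `|q¹| ≤ C·Δx²`. -/
theorem q_tra1_approximate_C_property (g μ A m M₀ M₁ M₂ : ℝ) (hg : 0 < g) (hμ : 0 < μ)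
    (hm : 0 < m) (H : ℝ → ℝ) (hH : ContDiff ℝ 2 H)
    (hlow : ∀ x, m ≤ H x) (hup : ∀ x, H x ≤ M₀)
    (hd1 : ∀ x, |deriv H x| ≤ M₁) (hd2 : ∀ x, |deriv (deriv H) x| ≤ M₂) :
    let b : ℝ → ℝ := fun x => A - H x
    ∃ C > 0, ∀ x Δx : ℝ, 0 < Δx → Δx ≤ 1 →
      let Δt : ℝ := μ * Δx
      let hminus : ℝ := H (x - Δx)
      let h0 : ℝ := H x
      let hplus : ℝ := H (x + Δx)
      let hhat : ℝ := h0 + Δt / (2 * Δx) *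
        ((hplus - h0) * Real.sqrt (g * (hplus + h0) / 2) -
          (h0 - hminus) * Real.sqrt (g * (h0 + hminus) / 2))
      let qhat : ℝ := -(g * Δt / (4 * Δx)) * (hplus ^ 2 - hminus ^ 2)
      let h1 : ℝ := hhat
      let q1 : ℝ := qhat - g * ((b (x + Δx) - b (x - Δx)) / (2 * Δx)) * (Δt / 2) * (h0 + hhat)
      |h1 - H x| ≤ C * Δx ^ 2 ∧ |q1| ≤ C * Δx ^ 2 := by
  intro b
  have hdiffH : Differentiable ℝ H := hH.differentiable (by norm_num)
  have hdiffH' : Differentiable ℝ (deriv H) := by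
    have h : ContDiff ℝ ((1:ℕ)+1) H := by exact_mod_cast hH
    exact ((contDiff_succ_iff_deriv.mp h).2.2).differentiable (by norm_num)
  have hM1 : 0 ≤ M₁ := (abs_nonneg _).trans (hd1 0)
  have hM2 : 0 ≤ M₂ := (abs_nonneg _).trans (hd2 0)
  have hM0 : 0 < M₀ := hm.trans_le ((hlow 0).trans (hup 0))
  set s0 : ℝ := Real.sqrt (g * m) with hs0def
  have hs0 : 0 < s0 := Real.sqrt_pos.mpr (by positivity)
  have hs0ne : s0 ≠ 0 := ne_of_gt hs0
  set S : ℝ := Real.sqrt (g * M₀) with hSdef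
  have hS : 0 ≤ S := Real.sqrt_nonneg _
  set C₁ : ℝ := μ * M₂ * S + μ * g * M₁ ^ 2 / (4 * s0) with hC₁def
  have hC₁ : 0 ≤ C₁ := by positivity
  set C₂ : ℝ := g * μ / 2 * M₁ * (2 * M₂ + C₁) with hC₂def
  have hC₂ : 0 ≤ C₂ := by positivity
  refine ⟨max C₁ C₂ + 1, by positivity, ?_⟩
  intro x Δx hΔx hΔx1
  have hne : Δx ≠ 0 := ne_of_gt hΔx
  -- Lipschitz bounds
  have lipH : ∀ u v : ℝ, |H u - H v| ≤ M₁ * |u - v| := by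
    intro u v
    have := Convex.norm_image_sub_le_of_norm_deriv_le (s := (Set.univ : Set ℝ))
      (fun t _ => (hdiffH t)) (fun t _ => hd1 t) convex_univ (Set.mem_univ v) (Set.mem_univ u)
    simpa [Real.norm_eq_abs] using this
  have lipH' : ∀ u v : ℝ, |deriv H u - deriv H v| ≤ M₂ * |u - v| := by
    intro u v
    have := Convex.norm_image_sub_le_of_norm_deriv_le (s := (Set.univ : Set ℝ))
      (fun t _ => (hdiffH' t)) (fun t _ => hd2 t) convex_univ (Set.mem_univ v) (Set.mem_univ u)
    simpa [Real.norm_eq_abs] using this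
  set d : ℝ := deriv H x with hddef
  set P : ℝ := H (x + Δx) with hP
  set Q : ℝ := H x with hQ
  set R : ℝ := H (x - Δx) with hR
  -- Taylor bounds
  have hφ : ∀ u v : ℝ, u ∈ Set.Icc (x - Δx) (x + Δx) → v ∈ Set.Icc (x - Δx) (x + Δx) →
      |(H u - d * u) - (H v - d * v)| ≤ M₂ * Δx * |u - v| := by
    intro u v hu hv
    have hda : ∀ t : ℝ, HasDerivAt (fun t => H t - d * t) (deriv H t - d) t := by
      intro t
      exact (((hdiffH t).hasDerivAt).sub ((hasDerivAt_id t).const_mul d)).congr_deriv (by simp)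
    have hdf : ∀ t : ℝ, t ∈ Set.Icc (x - Δx) (x + Δx) →
        DifferentiableAt ℝ (fun t => H t - d * t) t := fun t _ => (hda t).differentiableAt
    have hbd : ∀ t : ℝ, t ∈ Set.Icc (x - Δx) (x + Δx) →
        ‖deriv (fun t => H t - d * t) t‖ ≤ M₂ * Δx := by
      intro t ht
      rw [(hda t).deriv, Real.norm_eq_abs]
      have h1 : |deriv H t - deriv H x| ≤ M₂ * |t - x| := lipH' t x
      have h2 : |t - x| ≤ Δx := by
        rw [abs_le]; exact ⟨by linarith [ht.1], by linarith [ht.2]⟩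
      calc |deriv H t - d| ≤ M₂ * |t - x| := h1
        _ ≤ M₂ * Δx := by nlinarith [abs_nonneg (t - x)]
    have := Convex.norm_image_sub_le_of_norm_deriv_le hdf hbd (convex_Icc _ _) hv hu
    simpa [Real.norm_eq_abs] using this
  have hmemp : x + Δx ∈ Set.Icc (x - Δx) (x + Δx) := by constructor <;> linarith
  have hmem0 : x ∈ Set.Icc (x - Δx) (x + Δx) := by constructor <;> linarith
  have hmemm : x - Δx ∈ Set.Icc (x - Δx) (x + Δx) := by constructor <;> linarith
  have tayp : |P - Q - d * Δx| ≤ M₂ * Δx ^ 2 := by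
    have h := hφ (x + Δx) x hmemp hmem0
    have he : (H (x + Δx) - d * (x + Δx)) - (H x - d * x) = P - Q - d * Δx := by
      rw [← hP, ← hQ]; ring
    rw [he] at h
    calc |P - Q - d * Δx| ≤ M₂ * Δx * |x + Δx - x| := h
      _ = M₂ * Δx ^ 2 := by rw [show x + Δx - x = Δx by ring, abs_of_pos hΔx]; ring
  have taym : |Q - R - d * Δx| ≤ M₂ * Δx ^ 2 := by
    have h := hφ x (x - Δx) hmem0 hmemm
    have he : (H x - d * x) - (H (x - Δx) - d * (x - Δx)) = Q - R - d * Δx := by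
      rw [← hQ, ← hR]; ring
    rw [he] at h
    calc |Q - R - d * Δx| ≤ M₂ * Δx * |x - (x - Δx)| := h
      _ = M₂ * Δx ^ 2 := by rw [show x - (x - Δx) = Δx by ring, abs_of_pos hΔx]; ring
  have hDD : |(P - Q) - (Q - R)| ≤ 2 * M₂ * Δx ^ 2 := by
    have he : (P - Q) - (Q - R) = (P - Q - d * Δx) - (Q - R - d * Δx) := by ring
    rw [he]
    calc |(P - Q - d * Δx) - (Q - R - d * Δx)| ≤ |P - Q - d * Δx| + |Q - R - d * Δx| :=
      abs_sub _ _
      _ ≤ 2 * M₂ * Δx ^ 2 := by linarith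
  have hPR : |P - R| ≤ 2 * M₁ * Δx := by
    have h := lipH (x + Δx) (x - Δx)
    rw [← hP, ← hR] at h
    calc |P - R| ≤ M₁ * |x + Δx - (x - Δx)| := h
      _ = 2 * M₁ * Δx := by rw [show x + Δx - (x - Δx) = 2 * Δx by ring,
        abs_of_pos (by linarith : (0:ℝ) < 2 * Δx)]; ring
  have hQR : |Q - R| ≤ M₁ * Δx := by
    have h := lipH x (x - Δx)
    rw [← hQ, ← hR] at h
    calc |Q - R| ≤ M₁ * |x - (x - Δx)| := h
      _ = M₁ * Δx := by rw [show x - (x - Δx) = Δx by ring, abs_of_pos hΔx]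
  -- sqrt bounds
  set sp : ℝ := Real.sqrt (g * (P + Q) / 2) with hspdef
  set sm : ℝ := Real.sqrt (g * (Q + R) / 2) with hsmdef
  have hlowP : m ≤ P := hP ▸ hlow (x + Δx)
  have hlowQ : m ≤ Q := hQ ▸ hlow x
  have hlowR : m ≤ R := hR ▸ hlow (x - Δx)
  have hupP : P ≤ M₀ := hP ▸ hup (x + Δx)
  have hupQ : Q ≤ M₀ := hQ ▸ hup x
  have hsp_le : sp ≤ S := by
    apply Real.sqrt_le_sqrt
    nlinarith [mul_nonneg hg.le (sub_nonneg.mpr hupP), mul_nonneg hg.le (sub_nonneg.mpr hupQ)]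
  have hsp_nn : 0 ≤ sp := Real.sqrt_nonneg _
  have hss : |sp - sm| ≤ g * M₁ * Δx / (2 * s0) := by
    have h1 : g * m ≤ g * (P + Q) / 2 := by
      nlinarith [mul_nonneg hg.le (sub_nonneg.mpr hlowP), mul_nonneg hg.le (sub_nonneg.mpr hlowQ)]
    have h2 : g * m ≤ g * (Q + R) / 2 := by
      nlinarith [mul_nonneg hg.le (sub_nonneg.mpr hlowQ), mul_nonneg hg.le (sub_nonneg.mpr hlowR)]
    have h := sqrt_lip_aux (show (0:ℝ) < g * m by positivity) h1 h2
    rw [← hspdef, ← hsmdef, ← hs0def] at h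
    refine h.trans ?_
    gcongr
    have he : g * (P + Q) / 2 - g * (Q + R) / 2 = g / 2 * (P - R) := by ring
    rw [he, abs_mul, abs_of_pos (by positivity : (0:ℝ) < g / 2)]
    calc g / 2 * |P - R| ≤ g / 2 * (2 * M₁ * Δx) := by gcongr
      _ = g * M₁ * Δx := by ring
  -- main estimate for h
  set T : ℝ := (P - Q) * sp - (Q - R) * sm with hTdef
  have hT : |T| ≤ (2 * M₂ * S + g * M₁ ^ 2 / (2 * s0)) * Δx ^ 2 := by
    have he : T = ((P - Q) - (Q - R)) * sp + (Q - R) * (sp - sm) := by rw [hTdef]; ring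
    rw [he]
    calc |((P - Q) - (Q - R)) * sp + (Q - R) * (sp - sm)|
        ≤ |((P - Q) - (Q - R))| * |sp| + |Q - R| * |sp - sm| := by
          refine (abs_add_le _ _).trans ?_
          rw [abs_mul, abs_mul]
      _ ≤ (2 * M₂ * Δx ^ 2) * S + (M₁ * Δx) * (g * M₁ * Δx / (2 * s0)) := by
          rw [abs_of_nonneg hsp_nn]
          gcongr
      _ = (2 * M₂ * S + g * M₁ ^ 2 / (2 * s0)) * Δx ^ 2 := by field_simp
  have hfrac : μ * Δx / (2 * Δx) = μ / 2 := by field_simp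
  have step1 : |μ / 2 * T| ≤ C₁ * Δx ^ 2 := by
    rw [abs_mul, abs_of_pos (by positivity : (0:ℝ) < μ / 2)]
    calc μ / 2 * |T| ≤ μ / 2 * ((2 * M₂ * S + g * M₁ ^ 2 / (2 * s0)) * Δx ^ 2) := by gcongr
      _ = C₁ * Δx ^ 2 := by rw [hC₁def]; field_simp; ring
  have hΔ2 : (0:ℝ) < Δx ^ 2 := by positivity
  have hCmax1 : C₁ ≤ max C₁ C₂ + 1 := by have := le_max_left C₁ C₂; linarith
  have hCmax2 : C₂ ≤ max C₁ C₂ + 1 := by have := le_max_right C₁ C₂; linarith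
  -- goal 1
  have goal1 : |Q + μ * Δx / (2 * Δx) * T - Q| ≤ (max C₁ C₂ + 1) * Δx ^ 2 := by
    rw [hfrac, show Q + μ / 2 * T - Q = μ / 2 * T by ring]
    exact step1.trans (mul_le_mul_of_nonneg_right hCmax1 hΔ2.le)
  -- goal 2
  have goal2 : |-(g * (μ * Δx) / (4 * Δx)) * (P ^ 2 - R ^ 2) -
      g * (((A - P) - (A - R)) / (2 * Δx)) * ((μ * Δx) / 2) * (Q + (Q + μ * Δx / (2 * Δx) * T))|
      ≤ (max C₁ C₂ + 1) * Δx ^ 2 := by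
    have hE : -(g * (μ * Δx) / (4 * Δx)) * (P ^ 2 - R ^ 2) -
        g * (((A - P) - (A - R)) / (2 * Δx)) * ((μ * Δx) / 2) * (Q + (Q + μ * Δx / (2 * Δx) * T))
        = g * μ / 4 * (P - R) * ((μ / 2 * T) - ((P - Q) - (Q - R))) := by
      field_simp
      ring
    rw [hE, abs_mul, abs_mul, abs_of_pos (by positivity : (0:ℝ) < g * μ / 4)]
    have hsub : |(μ / 2 * T) - ((P - Q) - (Q - R))| ≤ C₁ * Δx ^ 2 + 2 * M₂ * Δx ^ 2 :=
      (abs_sub _ _).trans (by linarith)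
    calc g * μ / 4 * |P - R| * |(μ / 2 * T) - ((P - Q) - (Q - R))|
        ≤ g * μ / 4 * (2 * M₁ * Δx) * (C₁ * Δx ^ 2 + 2 * M₂ * Δx ^ 2) := by
          gcongr
      _ = (C₂ * Δx ^ 2) * Δx := by rw [hC₂def]; ring
      _ ≤ (C₂ * Δx ^ 2) * 1 := by
          exact mul_le_mul_of_nonneg_left hΔx1 (by positivity)
      _ = C₂ * Δx ^ 2 := by ring
      _ ≤ (max C₁ C₂ + 1) * Δx ^ 2 := mul_le_mul_of_nonneg_right hCmax2 hΔ2.le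
  exact ⟨goal1, goal2⟩
end

section
/- (Exact C-property of Q-tra2.) Let g > 0, Δx > 0, Δt > 0, A ∈ ℝ and h_{j−1}, h_j, h_{j+1} > 0, and set b_i := A − h_i for i = j−1, j, j+1. Let ĥ_j, q̂_j be the Q-scheme predictor values, and define the upwinded source updates h_L := ĥ_j − (Δt/Δx)·(b_j − b_{j−1})·√(g·(h_j + h_{j−1})/2), h_R := ĥ_j + (Δt/Δx)·(b_{j+1} − b_j)·√(g·(h_{j+1} + h_j)/2), q_L := q̂_j − (g·Δt/(2Δx))·(b_j − b_{j−1})·(h_j + h_{j−1}), and q_R := q̂_j − (g·Δt/(2Δx))·(b_{j+1} − b_j)·(h_{j+1} + h_j). Then (h_L + h_R)/2 = h_j and (q_L + q_R)/2 = 0; that is, one full Q-tra2 step reproduces the lake-at-rest state exactly. -/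
/-- Exact C-property of Q-tra2: Let `g > 0`, `Δx > 0`, `Δt > 0`, `A ∈ ℝ` and
`h₋, h₀, h₊ > 0` (standing for `h_{j−1}, h_j, h_{j+1}`), and set `bᵢ := A − hᵢ`. With the
Q-scheme predictor values `ĥ_j, q̂_j` and the upwinded source updates `h_L, h_R, q_L, q_R`,
one has `(h_L + h_R)/2 = h_j` and `(q_L + q_R)/2 = 0`; i.e. one full Q-tra2 step reproduces
the lake-at-rest state exactly. -/
theorem q_tra2_exact_C_property (g Δx Δt A hm h0 hp : ℝ)
    (hg : 0 < g) (hΔx : 0 < Δx) (hΔt : 0 < Δt)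
    (hhm : 0 < hm) (hh0 : 0 < h0) (hhp : 0 < hp) :
    let bm : ℝ := A - hm
    let b0 : ℝ := A - h0
    let bp : ℝ := A - hp
    let hhat : ℝ := h0 + Δt / (2 * Δx) *
      ((hp - h0) * Real.sqrt (g * (hp + h0) / 2) -
        (h0 - hm) * Real.sqrt (g * (h0 + hm) / 2))
    let qhat : ℝ := -(g * Δt / (4 * Δx)) * (hp ^ 2 - hm ^ 2)
    let hL : ℝ := hhat - Δt / Δx * (b0 - bm) * Real.sqrt (g * (h0 + hm) / 2)
    let hR : ℝ := hhat + Δt / Δx * (bp - b0) * Real.sqrt (g * (hp + h0) / 2)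
    let qL : ℝ := qhat - g * Δt / (2 * Δx) * (b0 - bm) * (h0 + hm)
    let qR : ℝ := qhat - g * Δt / (2 * Δx) * (bp - b0) * (hp + h0)
    (hL + hR) / 2 = h0 ∧ (qL + qR) / 2 = 0 := by
  have hx : Δx ≠ 0 := ne_of_gt hΔx
  constructor <;> · field_simp; ring
end
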